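/- With the CAM setup, for every γ ∈ ℝ^k one has MSE(θ̂_γ) − MSE(θ̂₀) = γᵀ(Λ + B Bᵀ)γ − 2 γᵀ(Ω + b(θ̂₀)·B). -/

import Mathlib

open MeasureTheory ProbabilityTheory
open scoped NNReal ENNReal BigOperators

/-- Covariance of two real random variables:
`Cov(f,g) := E[(f − E f)(g − E g)]`. -/
noncomputable def cov {Ω : Type*} [MeasurableSpace Ω] (μ : Measure Ω) (f g : Ω → ℝ) : ℝ :=
  ∫ ω, (f ω - ∫ ω', f ω' ∂μ) * (g ω - ∫ ω', g ω' ∂μ) ∂μ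

lemma camIntMul {Ωs : Type*} [MeasurableSpace Ωs] {P : Measure Ωs} [IsProbabilityMeasure P]
    {f g : Ωs → ℝ} (hf : MemLp f 2 P) (hg : MemLp g 2 P) :
    Integrable (fun ω => f ω * g ω) P := by
  have h : MemLp (f • g) 1 P := hg.smul hf (hpqr := ⟨by simpa using ENNReal.inv_two_add_inv_two⟩)
  exact h.integrable le_rfl

lemma camCov {Ωs : Type*} [MeasurableSpace Ωs] {P : Measure Ωs} [IsProbabilityMeasure P]
    {f g : Ωs → ℝ} (hf : MemLp f 2 P) (hg : MemLp g 2 P) :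
    cov P f g = (∫ ω, f ω * g ω ∂P) - (∫ ω, f ω ∂P) * (∫ ω, g ω ∂P) := by
  have hif : Integrable f P := hf.integrable one_le_two
  have hig : Integrable g P := hg.integrable one_le_two
  have hifg : Integrable (fun ω => f ω * g ω) P := camIntMul hf hg
  set mf := ∫ ω, f ω ∂P
  set mg := ∫ ω, g ω ∂P
  have iA : Integrable (fun ω => f ω * g ω - mf * g ω) P := hifg.sub (hig.const_mul mf)
  have iB : Integrable (fun ω => mg * f ω - mf * mg) P :=
    (hif.const_mul mg).sub (integrable_const _)
  have h1 : ∀ ω, (f ω - mf) * (g ω - mg)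
      = f ω * g ω - mf * g ω - (mg * f ω - mf * mg) := by intro ω; ring
  have hc : cov P f g = ∫ ω, (f ω * g ω - mf * g ω - (mg * f ω - mf * mg)) ∂P := by
    unfold cov; exact integral_congr_ae (Filter.Eventually.of_forall h1)
  rw [hc, integral_sub iA iB, integral_sub hifg (hig.const_mul mf),
    integral_sub (hif.const_mul mg) (integrable_const _),
    integral_const_mul, integral_const_mul, integral_const]
  simp [measure_univ]
  ring

/-- **Proposition 1, first part.** CAM setup: on a probability space, let
`θ ∈ ℝ` be a fixed parameter, `θ̂₀` a square-integrable real random variable, and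
`θ̂₀M, θ̂M` square-integrable random vectors in `ℝ^k` such that `θ̂M` is independent of
the pair `(θ̂₀, θ̂₀M)`.  For `γ ∈ ℝ^k` the CAM estimator is
`θ̂_γ := θ̂₀ − γᵀ(θ̂₀M − θ̂M)` and `MSE(θ̂) := E[(θ̂ − θ)²]`.  With
`b(θ̂₀) := E θ̂₀ − θ`, `B := E(θ̂₀M − θ̂M)`, `Ω_j := Cov(θ̂₀, (θ̂₀M)_j)` and
`Λ := Var(θ̂₀M − θ̂M)`, one has, for every `γ ∈ ℝ^k`:
`MSE(θ̂_γ) − MSE(θ̂₀) = γᵀ(Λ + B Bᵀ)γ − 2 γᵀ(Ω + b(θ̂₀)·B)`. -/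
theorem stmt0 {Ωs : Type*} [MeasurableSpace Ωs] (P : Measure Ωs) [IsProbabilityMeasure P]
    (k : ℕ) (θ : ℝ) (θhat0 : Ωs → ℝ) (θhat0M θhatM : Ωs → Fin k → ℝ)
    (hmeas0 : Measurable θhat0) (hmeas0M : Measurable θhat0M) (hmeasM : Measurable θhatM)
    (hL2_0 : MemLp θhat0 2 P)
    (hL2_0M : ∀ j, MemLp (fun ω => θhat0M ω j) 2 P)
    (hL2_M : ∀ j, MemLp (fun ω => θhatM ω j) 2 P)
    (hindep : IndepFun (fun ω => (θhat0 ω, θhat0M ω)) θhatM P)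
    (γ : Fin k → ℝ) :
    (∫ ω, (θhat0 ω - (∑ j, γ j * (θhat0M ω j - θhatM ω j)) - θ) ^ 2 ∂P)
        - (∫ ω, (θhat0 ω - θ) ^ 2 ∂P)
      = (∑ i, ∑ j, γ i *
            (cov P (fun ω => θhat0M ω i - θhatM ω i) (fun ω => θhat0M ω j - θhatM ω j)
              + (∫ ω, (θhat0M ω i - θhatM ω i) ∂P) * (∫ ω, (θhat0M ω j - θhatM ω j) ∂P))
            * γ j)
        - 2 * ∑ j, γ j *
            (cov P θhat0 (fun ω => θhat0M ω j)
              + ((∫ ω, θhat0 ω ∂P) - θ) * (∫ ω, (θhat0M ω j - θhatM ω j) ∂P)) := by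
  classical
  have hD2 : ∀ j, MemLp (fun ω => θhat0M ω j - θhatM ω j) 2 P :=
    fun j => (hL2_0M j).sub (hL2_M j)
  have hX2 : MemLp (fun ω => θhat0 ω - θ) 2 P := hL2_0.sub (memLp_const θ)
  have hS2 : MemLp (fun ω => ∑ j, γ j * (θhat0M ω j - θhatM ω j)) 2 P :=
    memLp_finset_sum _ (fun j _ => (hD2 j).const_mul (γ j))
  have iXX : Integrable (fun ω => (θhat0 ω - θ) * (θhat0 ω - θ)) P := camIntMul hX2 hX2
  have iXS : Integrable (fun ω =>
      (θhat0 ω - θ) * ∑ j, γ j * (θhat0M ω j - θhatM ω j)) P := camIntMul hX2 hS2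
  have iSS : Integrable (fun ω =>
      (∑ j, γ j * (θhat0M ω j - θhatM ω j)) * ∑ j, γ j * (θhat0M ω j - θhatM ω j)) P :=
    camIntMul hS2 hS2
  have iDD : ∀ i j, Integrable (fun ω =>
      (θhat0M ω i - θhatM ω i) * (θhat0M ω j - θhatM ω j)) P :=
    fun i j => camIntMul (hD2 i) (hD2 j)
  have iXD : ∀ j, Integrable (fun ω => (θhat0 ω - θ) * (θhat0M ω j - θhatM ω j)) P :=
    fun j => camIntMul hX2 (hD2 j)
  have i0 : Integrable θhat0 P := hL2_0.integrable one_le_two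
  have iD : ∀ j, Integrable (fun ω => θhat0M ω j - θhatM ω j) P :=
    fun j => (hD2 j).integrable one_le_two
  have iMj : ∀ j, Integrable (fun ω => θhatM ω j) P := fun j => (hL2_M j).integrable one_le_two
  have i0Mj' : ∀ j, Integrable (fun ω => θhat0 ω * θhatM ω j) P :=
    fun j => camIntMul hL2_0 (hL2_M j)
  have i00M : ∀ j, Integrable (fun ω => θhat0 ω * θhat0M ω j) P :=
    fun j => camIntMul hL2_0 (hL2_0M j)
  -- independence
  have hI : ∀ j, IndepFun θhat0 (fun ω => θhatM ω j) P :=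
    fun j => hindep.comp measurable_fst (measurable_pi_apply j)
  have i0Mj : ∀ j, ∫ ω, θhat0 ω * θhatM ω j ∂P
      = (∫ ω, θhat0 ω ∂P) * ∫ ω, θhatM ω j ∂P := by
    intro j
    simpa using (hI j).integral_mul_eq_mul_integral i0.aestronglyMeasurable (iMj j).aestronglyMeasurable
  -- Step A
  have hA : (∫ ω, (θhat0 ω - (∑ j, γ j * (θhat0M ω j - θhatM ω j)) - θ) ^ 2 ∂P)
      = (∫ ω, (θhat0 ω - θ) * (θhat0 ω - θ) ∂P)
        - 2 * (∫ ω, (θhat0 ω - θ) * ∑ j, γ j * (θhat0M ω j - θhatM ω j) ∂P)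
        + ∫ ω, (∑ j, γ j * (θhat0M ω j - θhatM ω j))
            * ∑ j, γ j * (θhat0M ω j - θhatM ω j) ∂P := by
    have h1 : ∀ ω, (θhat0 ω - (∑ j, γ j * (θhat0M ω j - θhatM ω j)) - θ) ^ 2
        = ((θhat0 ω - θ) * (θhat0 ω - θ)
            - 2 * ((θhat0 ω - θ) * ∑ j, γ j * (θhat0M ω j - θhatM ω j)))
          + (∑ j, γ j * (θhat0M ω j - θhatM ω j))
            * ∑ j, γ j * (θhat0M ω j - θhatM ω j) := by
      intro ω; ring
    have iA1 : Integrable (fun ω => (θhat0 ω - θ) * (θhat0 ω - θ)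
        - 2 * ((θhat0 ω - θ) * ∑ j, γ j * (θhat0M ω j - θhatM ω j))) P :=
      iXX.sub (iXS.const_mul 2)
    rw [integral_congr_ae (Filter.Eventually.of_forall h1),
      integral_add iA1 iSS,
      integral_sub iXX (iXS.const_mul 2), integral_const_mul]
  have hB : (∫ ω, (θhat0 ω - θ) ^ 2 ∂P) = ∫ ω, (θhat0 ω - θ) * (θhat0 ω - θ) ∂P := by
    refine integral_congr_ae (Filter.Eventually.of_forall fun ω => ?_); ring
  -- Step B : expand ∫ S·S
  have hSS : (∫ ω, (∑ j, γ j * (θhat0M ω j - θhatM ω j))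
        * ∑ j, γ j * (θhat0M ω j - θhatM ω j) ∂P)
      = ∑ i, ∑ j, γ i * γ j * ∫ ω, (θhat0M ω i - θhatM ω i) * (θhat0M ω j - θhatM ω j) ∂P := by
    have h1 : ∀ ω, (∑ j, γ j * (θhat0M ω j - θhatM ω j))
          * ∑ j, γ j * (θhat0M ω j - θhatM ω j)
        = ∑ i, ∑ j, γ i * γ j * ((θhat0M ω i - θhatM ω i) * (θhat0M ω j - θhatM ω j)) := by
      intro ω
      rw [Finset.sum_mul_sum]
      exact Finset.sum_congr rfl fun i _ => Finset.sum_congr rfl fun j _ => by ring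
    rw [integral_congr_ae (Filter.Eventually.of_forall h1),
      integral_finset_sum _ (fun i _ =>
        integrable_finset_sum _ (fun j _ => (iDD i j).const_mul _))]
    refine Finset.sum_congr rfl fun i _ => ?_
    rw [integral_finset_sum _ (fun j _ => (iDD i j).const_mul _)]
    exact Finset.sum_congr rfl fun j _ => integral_const_mul _ _
  -- Step C : expand ∫ X·S
  have hXS : (∫ ω, (θhat0 ω - θ) * ∑ j, γ j * (θhat0M ω j - θhatM ω j) ∂P)
      = ∑ j, γ j * ∫ ω, (θhat0 ω - θ) * (θhat0M ω j - θhatM ω j) ∂P := by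
    have h1 : ∀ ω, (θhat0 ω - θ) * ∑ j, γ j * (θhat0M ω j - θhatM ω j)
        = ∑ j, γ j * ((θhat0 ω - θ) * (θhat0M ω j - θhatM ω j)) := by
      intro ω
      rw [Finset.mul_sum]
      exact Finset.sum_congr rfl fun j _ => by ring
    rw [integral_congr_ae (Filter.Eventually.of_forall h1),
      integral_finset_sum _ (fun j _ => (iXD j).const_mul _)]
    exact Finset.sum_congr rfl fun j _ => integral_const_mul _ _
  -- Step D
  have hDD : ∀ i j, (∫ ω, (θhat0M ω i - θhatM ω i) * (θhat0M ω j - θhatM ω j) ∂P)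
      = cov P (fun ω => θhat0M ω i - θhatM ω i) (fun ω => θhat0M ω j - θhatM ω j)
        + (∫ ω, (θhat0M ω i - θhatM ω i) ∂P) * (∫ ω, (θhat0M ω j - θhatM ω j) ∂P) := by
    intro i j
    rw [camCov (hD2 i) (hD2 j)]; ring
  -- Step E
  have hXD : ∀ j, (∫ ω, (θhat0 ω - θ) * (θhat0M ω j - θhatM ω j) ∂P)
      = cov P θhat0 (fun ω => θhat0M ω j)
        + ((∫ ω, θhat0 ω ∂P) - θ) * ∫ ω, (θhat0M ω j - θhatM ω j) ∂P := by
    intro j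
    have expand : ∀ ω, (θhat0 ω - θ) * (θhat0M ω j - θhatM ω j)
        = (θhat0 ω * θhat0M ω j - θhat0 ω * θhatM ω j) - θ * (θhat0M ω j - θhatM ω j) := by
      intro ω; ring
    have hDint : (∫ ω, (θhat0M ω j - θhatM ω j) ∂P)
        = (∫ ω, θhat0M ω j ∂P) - ∫ ω, θhatM ω j ∂P :=
      integral_sub ((hL2_0M j).integrable one_le_two) (iMj j)
    have iE1 : Integrable (fun ω => θhat0 ω * θhat0M ω j - θhat0 ω * θhatM ω j) P :=
      (i00M j).sub (i0Mj' j)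
    rw [integral_congr_ae (Filter.Eventually.of_forall expand),
      integral_sub iE1 ((iD j).const_mul θ),
      integral_sub (i00M j) (i0Mj' j), integral_const_mul,
      camCov hL2_0 (hL2_0M j), i0Mj j, hDint]
    ring
  -- assemble
  rw [hA, hB, hSS, hXS]
  simp only [hDD, hXD]
  have hC : (∑ i, ∑ j, γ i * γ j *
        (cov P (fun ω => θhat0M ω i - θhatM ω i) (fun ω => θhat0M ω j - θhatM ω j)
          + (∫ ω, (θhat0M ω i - θhatM ω i) ∂P) * (∫ ω, (θhat0M ω j - θhatM ω j) ∂P)))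
      = ∑ i, ∑ j, γ i *
            (cov P (fun ω => θhat0M ω i - θhatM ω i) (fun ω => θhat0M ω j - θhatM ω j)
              + (∫ ω, (θhat0M ω i - θhatM ω i) ∂P) * (∫ ω, (θhat0M ω j - θhatM ω j) ∂P))
            * γ j :=
    Finset.sum_congr rfl fun i _ => Finset.sum_congr rfl fun j _ => by ring
  rw [hC]
  ring
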